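/- Let S be a complete and decomposable SPN over Boolean variables X_1,...,X_N whose root has scope {X_1,...,X_N}, with positive edge weights w. Then the sum of the network polynomial over all inputs equals its value with all indicators set to one: sum over x in {0,1}^N of f_S(x|w) = f_S(1|w). -/

import Mathlib

inductive NodeKind
  | sum
  | prod
  | leaf
deriving DecidableEq

/-- A sum-product network over `N` Boolean variables, with node set `V`:
a rooted DAG (acyclicity witnessed by a rank function) whose leaves are
indicator variables and whose internal nodes are sum or product nodes. -/
structure SPN (V : Type) [Fintype V] [DecidableEq V] (N : ℕ) where
  root : V
  kind : V → NodeKind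
  children : V → Finset V
  leaf_children : ∀ v, kind v = NodeKind.leaf → children v = ∅
  internal_nonempty : ∀ v, kind v ≠ NodeKind.leaf → (children v).Nonempty
  root_no_parent : ∀ u, root ∉ children u
  leafVar : V → Fin N
  leafSign : V → Bool
  rank : V → ℕ
  rank_lt : ∀ v, ∀ u ∈ children v, rank u < rank v

namespace SPN

variable {V : Type} [Fintype V] [DecidableEq V] {N : ℕ}

/-- The value `f_v(·|w)` of every node, where `w` assigns a weight to every
edge `(v,u)` out of a sum node and `L` gives the value of every leaf. -/
noncomputable def evalWith (S : SPN V N) (w : V × V → ℝ) (L : V → ℝ) (v : V) : ℝ :=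
  match S.kind v with
  | NodeKind.leaf => L v
  | NodeKind.sum => ∑ u ∈ (S.children v).attach, w (v, u.1) * S.evalWith w L u.1
  | NodeKind.prod => ∏ u ∈ (S.children v).attach, S.evalWith w L u.1
termination_by S.rank v
decreasing_by
  · exact S.rank_lt v u.1 u.2
  · exact S.rank_lt v u.1 u.2

/-- The leaf values determined by an input `x ∈ {0,1}^N`: the leaf over
variable `X_n` is the indicator `I[x_n = leafSign]`. -/
def ind (S : SPN V N) (x : Fin N → Bool) (v : V) : ℝ :=
  if x (S.leafVar v) = S.leafSign v then 1 else 0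

/-- The scope of a node: its variable at a leaf, the union of the scopes of
the children at an internal node. -/
noncomputable def scope (S : SPN V N) (v : V) : Finset (Fin N) :=
  match S.kind v with
  | NodeKind.leaf => {S.leafVar v}
  | NodeKind.sum => (S.children v).attach.sup fun u => S.scope u.1
  | NodeKind.prod => (S.children v).attach.sup fun u => S.scope u.1
termination_by S.rank v
decreasing_by
  · exact S.rank_lt v u.1 u.2
  · exact S.rank_lt v u.1 u.2

/-- An SPN is complete if all children of every sum node have the same scope. -/
def Complete (S : SPN V N) : Prop :=
  ∀ v, S.kind v = NodeKind.sum →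
    ∀ u₁ ∈ S.children v, ∀ u₂ ∈ S.children v, S.scope u₁ = S.scope u₂

/-- An SPN is decomposable if the children of every product node have
pairwise disjoint scopes. -/
def Decomposable (S : SPN V N) : Prop :=
  ∀ v, S.kind v = NodeKind.prod →
    ∀ u₁ ∈ S.children v, ∀ u₂ ∈ S.children v, u₁ ≠ u₂ →
      Disjoint (S.scope u₁) (S.scope u₂)

/-- `(TV, TE)` is an induced SPN (induced tree) of `S`: a subgraph of `S`,
generated from the root, containing exactly one child of every sum node it
contains and all children of every product node it contains, together with
the corresponding edges. -/
structure IsInducedTree (S : SPN V N) (TV : Finset V) (TE : Finset (V × V)) : Prop where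
  root_mem : S.root ∈ TV
  edges_sub : ∀ e ∈ TE, e.1 ∈ TV ∧ e.2 ∈ TV ∧ e.2 ∈ S.children e.1
  reach : ∀ v ∈ TV, v ≠ S.root → ∃ u, (u, v) ∈ TE
  sum_unique : ∀ v ∈ TV, S.kind v = NodeKind.sum → ∃! u, u ∈ S.children v ∧ u ∈ TV
  sum_edge : ∀ v ∈ TV, S.kind v = NodeKind.sum → ∀ u ∈ S.children v, u ∈ TV → (v, u) ∈ TE
  prod_mem : ∀ v ∈ TV, S.kind v = NodeKind.prod → ∀ u ∈ S.children v, u ∈ TV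
  prod_edge : ∀ v ∈ TV, S.kind v = NodeKind.prod → ∀ u ∈ S.children v, (v, u) ∈ TE

end SPN

namespace SPN
variable {V : Type} [Fintype V] [DecidableEq V] {N : ℕ}

lemma evalWith_leaf (S : SPN V N) (w : V × V → ℝ) (L : V → ℝ) {v : V}
    (h : S.kind v = NodeKind.leaf) : S.evalWith w L v = L v := by
  rw [evalWith, h]

lemma evalWith_sum (S : SPN V N) (w : V × V → ℝ) (L : V → ℝ) {v : V}
    (h : S.kind v = NodeKind.sum) :
    S.evalWith w L v = ∑ u ∈ (S.children v).attach, w (v, u.1) * S.evalWith w L u.1 := by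
  rw [evalWith, h]

lemma evalWith_prod (S : SPN V N) (w : V × V → ℝ) (L : V → ℝ) {v : V}
    (h : S.kind v = NodeKind.prod) :
    S.evalWith w L v = ∏ u ∈ (S.children v).attach, S.evalWith w L u.1 := by
  rw [evalWith, h]

lemma scope_leaf (S : SPN V N) {v : V} (h : S.kind v = NodeKind.leaf) :
    S.scope v = {S.leafVar v} := by rw [scope, h]

lemma scope_sum (S : SPN V N) {v : V} (h : S.kind v = NodeKind.sum) :
    S.scope v = (S.children v).attach.sup fun u => S.scope u.1 := by rw [scope, h]

lemma scope_prod (S : SPN V N) {v : V} (h : S.kind v = NodeKind.prod) :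
    S.scope v = (S.children v).attach.sup fun u => S.scope u.1 := by rw [scope, h]

lemma scope_child_le (S : SPN V N) {v u : V} (hu : u ∈ S.children v) :
    S.scope u ⊆ S.scope v := by
  have h1 : S.scope u ≤ (S.children v).attach.sup fun u => S.scope u.1 :=
    Finset.le_sup (f := fun u : {u // u ∈ S.children v} => S.scope u.1)
      (Finset.mem_attach _ ⟨u, hu⟩)
  cases hk : S.kind v with
  | leaf => exact absurd (S.leaf_children v hk ▸ hu) (Finset.notMem_empty u)
  | sum => rw [S.scope_sum hk]; exact h1
  | prod => rw [S.scope_prod hk]; exact h1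

lemma scope_sum_child (S : SPN V N) (hC : S.Complete) {v u : V}
    (hk : S.kind v = NodeKind.sum) (hu : u ∈ S.children v) :
    S.scope v = S.scope u := by
  refine le_antisymm ?_ (S.scope_child_le hu)
  rw [S.scope_sum hk]
  exact Finset.sup_le fun a _ => (hC v hk a.1 a.2 u hu) ▸ le_rfl

theorem eval_scope (S : SPN V N) (w : V × V → ℝ) (v : V) (x y : Fin N → Bool)
    (h : ∀ i ∈ S.scope v, x i = y i) :
    S.evalWith w (S.ind x) v = S.evalWith w (S.ind y) v := by
  have hrec : ∀ u : {u // u ∈ S.children v}, ∀ i ∈ S.scope u.1, x i = y i := by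
    intro u i hi
    exact h i (S.scope_child_le u.2 hi)
  cases hk : S.kind v with
  | leaf =>
      rw [S.evalWith_leaf _ _ hk, S.evalWith_leaf _ _ hk]
      unfold ind
      rw [h (S.leafVar v) (by rw [S.scope_leaf hk]; simp)]
  | sum =>
      rw [S.evalWith_sum _ _ hk, S.evalWith_sum _ _ hk]
      refine Finset.sum_congr rfl fun u _ => ?_
      rw [eval_scope S w u.1 x y (hrec u)]
  | prod =>
      rw [S.evalWith_prod _ _ hk, S.evalWith_prod _ _ hk]
      refine Finset.prod_congr rfl fun u _ => ?_
      rw [eval_scope S w u.1 x y (hrec u)]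
termination_by S.rank v
decreasing_by
  · exact S.rank_lt v u.1 u.2
  · exact S.rank_lt v u.1 u.2


lemma sum_mul_sum_factor (s : Finset (Fin N)) (f g : (Fin N → Bool) → ℝ)
    (hf : ∀ x y : Fin N → Bool, (∀ i ∈ s, x i = y i) → f x = f y)
    (hg : ∀ x y : Fin N → Bool, (∀ i ∉ s, x i = y i) → g x = g y) :
    (∑ x : Fin N → Bool, f x) * (∑ x : Fin N → Bool, g x)
      = 2 ^ N * ∑ x : Fin N → Bool, f x * g x := by
  classical
  have hinv : Function.Involutive
      (fun p : (Fin N → Bool) × (Fin N → Bool) =>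
        (s.piecewise p.1 p.2, s.piecewise p.2 p.1)) := by
    intro p
    ext i <;> simp [Finset.piecewise] <;> split <;> rfl
  calc (∑ x : Fin N → Bool, f x) * (∑ x : Fin N → Bool, g x)
      = ∑ p : (Fin N → Bool) × (Fin N → Bool), f p.1 * g p.2 := by
        rw [Fintype.sum_prod_type, Finset.sum_mul]
        exact Finset.sum_congr rfl fun x _ => Finset.mul_sum _ _ _
    _ = ∑ p : (Fin N → Bool) × (Fin N → Bool),
          f (s.piecewise p.1 p.2) * g (s.piecewise p.2 p.1) :=
        (Fintype.sum_bijective _ hinv.bijective _ _ (fun p => rfl)).symm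
    _ = ∑ p : (Fin N → Bool) × (Fin N → Bool), f p.1 * g p.1 := by
        refine Fintype.sum_congr _ _ fun p => ?_
        have h1 : f (s.piecewise p.1 p.2) = f p.1 :=
          hf _ _ (fun i hi => by simp [Finset.piecewise, hi])
        have h2 : g (s.piecewise p.2 p.1) = g p.1 :=
          hg _ _ (fun i hi => by simp [Finset.piecewise, hi])
        rw [h1, h2]
    _ = 2 ^ N * ∑ x : Fin N → Bool, f x * g x := by
        rw [Fintype.sum_prod_type]
        simp [Finset.sum_const, Fintype.card_fun]
        ring_nf
        rw [Finset.sum_mul]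

theorem key (S : SPN V N) (hC : S.Complete) (hD : S.Decomposable)
    (w : V × V → ℝ) (v : V) :
    (2:ℝ) ^ (S.scope v).card * ∑ x : Fin N → Bool, S.evalWith w (S.ind x) v
      = 2 ^ N * S.evalWith w (fun _ => 1) v := by
  classical
  have hrec : ∀ u : {u // u ∈ S.children v},
      (2:ℝ) ^ (S.scope u.1).card * ∑ x : Fin N → Bool, S.evalWith w (S.ind x) u.1
        = 2 ^ N * S.evalWith w (fun _ => 1) u.1 :=
    fun u => key S hC hD w u.1
  cases hk : S.kind v with
  | leaf =>
      rw [S.scope_leaf hk]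
      simp only [Finset.card_singleton, pow_one]
      have hone : S.evalWith w (fun _ => 1) v = 1 := by
        rw [S.evalWith_leaf _ _ hk]
      rw [hone, mul_one]
      have : ∀ x : Fin N → Bool, S.evalWith w (S.ind x) v = S.ind x v :=
        fun x => S.evalWith_leaf _ _ hk
      simp only [this]
      unfold ind
      set n := S.leafVar v
      set b := S.leafSign v
      have hflip : Function.Involutive
          (fun x : Fin N → Bool => Function.update x n (!x n)) := by
        intro x
        ext i
        by_cases h : i = n <;> simp [Function.update_apply, h]
      have h3 : (∑ x : Fin N → Bool, if x n = b then (1:ℝ) else 0)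
          = ∑ x : Fin N → Bool, if x n = !b then (1:ℝ) else 0 := by
        refine Fintype.sum_bijective _ hflip.bijective _ _ fun x => ?_
        simp [Function.update_apply]
      have h4 : (∑ x : Fin N → Bool, if x n = b then (1:ℝ) else 0)
          + ∑ x : Fin N → Bool, (if x n = !b then (1:ℝ) else 0)
          = 2 ^ N := by
        rw [← Finset.sum_add_distrib]
        have : ∀ x : Fin N → Bool,
            ((if x n = b then (1:ℝ) else 0) + if x n = !b then (1:ℝ) else 0) = 1 := by
          intro x; cases x n <;> cases b <;> simp
        rw [Finset.sum_congr rfl (fun x _ => this x)]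
        simp [Finset.sum_const, Fintype.card_fun]
      linear_combination h4 + h3
  | sum =>
      have h1 : ∀ L : V → ℝ, S.evalWith w L v
          = ∑ u ∈ (S.children v).attach, w (v, u.1) * S.evalWith w L u.1 :=
        fun L => S.evalWith_sum w L hk
      simp only [h1]
      rw [Finset.sum_comm, Finset.mul_sum, Finset.mul_sum]
      refine Finset.sum_congr rfl fun u _ => ?_
      rw [← Finset.mul_sum, S.scope_sum_child hC hk u.2]
      linear_combination w (v, u.1) * hrec u
  | prod =>
      have hdisj : ∀ a ∈ (S.children v).attach, ∀ b ∈ (S.children v).attach,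
          a ≠ b → Disjoint (S.scope a.1) (S.scope b.1) :=
        fun a _ b _ hab => hD v hk a.1 a.2 b.1 b.2 fun h => hab (Subtype.ext h)
      have claim : ∀ t : Finset {u // u ∈ S.children v}, t ⊆ (S.children v).attach →
          (2:ℝ) ^ ((t.sup fun u => S.scope u.1).card)
              * ∑ x : Fin N → Bool, ∏ u ∈ t, S.evalWith w (S.ind x) u.1
            = 2 ^ N * ∏ u ∈ t, S.evalWith w (fun _ => 1) u.1 := by
        intro t
        induction t using Finset.induction_on with
        | empty =>
            intro _
            simp [Finset.sum_const, Fintype.card_fun]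
        | insert a t ha IH =>
            intro hsub
            have hat : a ∈ (S.children v).attach := hsub (Finset.mem_insert_self a t)
            have ht : t ⊆ (S.children v).attach :=
              fun u hu => hsub (Finset.mem_insert_of_mem hu)
            have hd : Disjoint (S.scope a.1) (t.sup fun u => S.scope u.1) :=
              Finset.disjoint_sup_right.2 fun u hu =>
                hdisj a hat u (ht hu) (by rintro rfl; exact ha hu)
            set F : (Fin N → Bool) → ℝ := fun x => S.evalWith w (S.ind x) a.1 with hF
            set G : (Fin N → Bool) → ℝ := fun x => ∏ u ∈ t, S.evalWith w (S.ind x) u.1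
              with hG
            have hFdep : ∀ x y : Fin N → Bool,
                (∀ i ∈ S.scope a.1, x i = y i) → F x = F y :=
              fun x y h => S.eval_scope w a.1 x y h
            have hGdep : ∀ x y : Fin N → Bool,
                (∀ i ∉ S.scope a.1, x i = y i) → G x = G y := by
              intro x y hxy
              refine Finset.prod_congr rfl fun u hu =>
                S.eval_scope w u.1 x y fun i hi => hxy i fun hia => ?_
              exact Finset.disjoint_left.1
                (hdisj a hat u (ht hu) (by rintro rfl; exact ha hu)) hia hi
            have hfac := sum_mul_sum_factor (S.scope a.1) F G hFdep hGdep
            have hIH := IH ht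
            have hA := hrec a
            have hsum : (∑ x : Fin N → Bool, ∏ u ∈ insert a t, S.evalWith w (S.ind x) u.1)
                = ∑ x : Fin N → Bool, F x * G x :=
              Finset.sum_congr rfl fun x _ => Finset.prod_insert ha
            rw [hsum, Finset.prod_insert ha, Finset.sup_insert]
            rw [show (S.scope a.1 ⊔ t.sup fun u => S.scope u.1)
                  = S.scope a.1 ∪ t.sup fun u => S.scope u.1 from rfl]
            rw [Finset.card_union_of_disjoint hd, pow_add]
            apply mul_left_cancel₀ (show (2:ℝ) ^ N ≠ 0 from pow_ne_zero _ two_ne_zero)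
            linear_combination
              (-((2:ℝ) ^ (S.scope a.1).card
                  * 2 ^ ((t.sup fun u => S.scope u.1).card))) * hfac
              + (((2:ℝ) ^ ((t.sup fun u => S.scope u.1).card))
                  * ∑ x : Fin N → Bool, G x) * hA
              + ((2:ℝ) ^ N * S.evalWith w (fun _ => 1) a.1) * hIH
      have h1 : ∀ L : V → ℝ, S.evalWith w L v
          = ∏ u ∈ (S.children v).attach, S.evalWith w L u.1 :=
        fun L => S.evalWith_prod w L hk
      simp only [h1]
      rw [S.scope_prod hk]
      exact claim _ (Finset.Subset.refl _)
termination_by S.rank v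
decreasing_by
  · exact S.rank_lt v u.1 u.2

end SPN


/-- Let `S` be a complete and decomposable SPN over Boolean
variables `X_1, …, X_N` whose root has scope `{X_1, …, X_N}`, with positive
edge weights `w`.  Then the sum of the network polynomial over all inputs
equals its value with all indicators set to one:
`∑_{x ∈ {0,1}^N} f_S(x|w) = f_S(1|w)`. -/
theorem sum_network_polynomial_eq_eval_one
    {V : Type} [Fintype V] [DecidableEq V] {N : ℕ} (S : SPN V N)
    (hC : S.Complete) (hD : S.Decomposable)
    (hroot : S.scope S.root = Finset.univ)
    (w : V × V → ℝ) (hw : ∀ e, 0 < w e) :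
    ∑ x : Fin N → Bool, S.evalWith w (S.ind x) S.root =
      S.evalWith w (fun _ => 1) S.root := by
  have h := SPN.key S hC hD w S.root
  rw [hroot, Finset.card_univ, Fintype.card_fin] at h
  exact mul_left_cancel₀ (pow_ne_zero _ two_ne_zero) h
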